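/- For every prime power q and every integer s ≥ 1, the infinite product ∏_{j=s}^∞ (1 − q^{−j}) is strictly greater than 1 − τ(q^{−s}). -/

import Mathlib

/-- `τ(x) := min(0.72, 2.1·x)`. -/
noncomputable def tau (x : ℝ) : ℝ := min 0.72 (2.1 * x)

/-- Finite Weierstrass bound: `1 - ∑ a ≤ ∏ (1 - a)` for `a i ∈ [0,1]`. -/
lemma one_sub_sum_le_prod (a : ℕ → ℝ) (h0 : ∀ i, 0 ≤ a i) (h1 : ∀ i, a i ≤ 1)
    (t : Finset ℕ) : 1 - ∑ i ∈ t, a i ≤ ∏ i ∈ t, (1 - a i) := by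
  induction t using Finset.cons_induction with
  | empty => simp
  | cons x t hx ih =>
    rw [Finset.sum_cons, Finset.prod_cons]
    have hS : 0 ≤ ∑ i ∈ t, a i := Finset.sum_nonneg fun i _ => h0 i
    have hpn : 0 ≤ ∏ i ∈ t, (1 - a i) :=
      Finset.prod_nonneg fun i _ => show (0:ℝ) ≤ 1 - a i by linarith [h1 i]
    nlinarith [h0 x, h1 x, ih]

/-- Products with factors in `[0,1]` converge to the infimum of partial products. -/
lemma hasProd_iInf (f : ℕ → ℝ) (h0 : ∀ j, 0 ≤ f j) (h1 : ∀ j, f j ≤ 1) :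
    HasProd f (⨅ t : Finset ℕ, ∏ j ∈ t, f j) := by
  have anti : Antitone (fun t : Finset ℕ => ∏ j ∈ t, f j) := by
    intro t u h
    dsimp only
    rw [← Finset.prod_sdiff h]
    exact mul_le_of_le_one_left (Finset.prod_nonneg fun i _ => h0 i)
      (Finset.prod_le_one (fun i _ => h0 i) (fun i _ => h1 i))
  refine tendsto_atTop_ciInf anti ⟨0, ?_⟩
  rintro x ⟨t, rfl⟩
  exact Finset.prod_nonneg fun i _ => h0 i

/-- Key finite bound for geometric factors. -/
lemma partial_prod_lb (r : ℝ) (hr0 : 0 < r) (hr : r ≤ 2⁻¹) (m k : ℕ) (hm : 1 ≤ m)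
    (t : Finset ℕ) :
    (∏ j ∈ Finset.range k, (1 - r ^ (m + j))) * (1 - r ^ (m + k) / (1 - r))
      ≤ ∏ j ∈ t, (1 - r ^ (m + j)) := by
  have hr1 : r < 1 := lt_of_le_of_lt hr (by norm_num)
  have hp0 : ∀ j : ℕ, 0 ≤ r ^ (m + j) := fun j => pow_nonneg hr0.le _
  have hp1 : ∀ j : ℕ, r ^ (m + j) ≤ 1 := fun j => pow_le_one₀ hr0.le hr1.le
  set u := t ∪ Finset.range k with hu
  have htu : t ⊆ u := Finset.subset_union_left
  have hku : Finset.range k ⊆ u := Finset.subset_union_right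
  -- ∏ over u ≤ ∏ over t
  have step1 : ∏ j ∈ u, (1 - r ^ (m + j)) ≤ ∏ j ∈ t, (1 - r ^ (m + j)) := by
    rw [← Finset.prod_sdiff htu]
    exact mul_le_of_le_one_left (Finset.prod_nonneg fun i _ => by linarith [hp1 i])
      (Finset.prod_le_one (fun i _ => by linarith [hp1 i]) (fun i _ => by linarith [hp0 i]))
  -- split u
  rw [← Finset.prod_sdiff hku] at step1
  refine le_trans ?_ step1
  have hv : ∀ j ∈ u \ Finset.range k, k ≤ j := by
    intro j hj
    have := (Finset.mem_sdiff.1 hj).2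
    simpa using this
  -- sum bound on the tail
  have hsum : ∑ j ∈ u \ Finset.range k, r ^ (m + j) ≤ r ^ (m + k) / (1 - r) := by
    set v := u \ Finset.range k
    have himg : ∑ i ∈ v.image (· - k), r ^ (m + k) * r ^ i
        = ∑ j ∈ v, r ^ (m + j) := by
      rw [Finset.sum_image]
      · refine Finset.sum_congr rfl fun j hj => ?_
        have hkj := hv j hj
        rw [← pow_add]
        congr 1
        omega
      · intro j1 h1 j2 h2 h
        have := hv j1 h1; have := hv j2 h2
        simp only at h
        omega
    rw [← himg]
    have hsummable : Summable (fun i : ℕ => r ^ (m + k) * r ^ i) :=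
      (summable_geometric_of_lt_one hr0.le hr1).mul_left _
    calc ∑ i ∈ v.image (· - k), r ^ (m + k) * r ^ i
        ≤ ∑' i : ℕ, r ^ (m + k) * r ^ i :=
          Summable.sum_le_tsum _ (fun i _ => mul_nonneg (hp0 k) (pow_nonneg hr0.le i)) hsummable
      _ = r ^ (m + k) * (1 - r)⁻¹ := by
          rw [tsum_mul_left, tsum_geometric_of_lt_one hr0.le hr1]
      _ = r ^ (m + k) / (1 - r) := by ring
  have := one_sub_sum_le_prod (fun j => r ^ (m + j)) hp0 hp1 (u \ Finset.range k)
  have hprodnn : 0 ≤ ∏ j ∈ Finset.range k, (1 - r ^ (m + j)) :=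
    Finset.prod_nonneg fun i _ => by linarith [hp1 i]
  have h2 : 1 - r ^ (m + k) / (1 - r) ≤ ∏ j ∈ u \ Finset.range k, (1 - r ^ (m + j)) := by
    refine le_trans ?_ this
    linarith
  calc (∏ j ∈ Finset.range k, (1 - r ^ (m + j))) * (1 - r ^ (m + k) / (1 - r))
      ≤ (∏ j ∈ Finset.range k, (1 - r ^ (m + j))) * ∏ j ∈ u \ Finset.range k, (1 - r ^ (m + j)) :=
        mul_le_mul_of_nonneg_left h2 hprodnn
    _ = _ := mul_comm _ _

/-- For every prime power `q` and every integer `s ≥ 1`, the infinite product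
`∏_{j=s}^∞ (1 − q^{−j})` is strictly greater than `1 − τ(q^{−s})`. -/
theorem stmt0 (q : ℕ) (hq : IsPrimePow q) (s : ℕ) (hs : 1 ≤ s) :
    1 - tau ((q : ℝ)⁻¹ ^ s) < ∏' j : ℕ, (1 - (q : ℝ)⁻¹ ^ (s + j)) := by
  have hq2 : 2 ≤ q := hq.two_le
  have hq2' : (2 : ℝ) ≤ (q : ℝ) := by exact_mod_cast hq2
  set r : ℝ := (q : ℝ)⁻¹ with hrdef
  have hr0 : 0 < r := inv_pos.2 (by linarith)
  have hr : r ≤ 2⁻¹ := by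
    rw [hrdef]
    exact inv_anti₀ (by norm_num) hq2'
  have hr1 : r < 1 := lt_of_le_of_lt hr (by norm_num)
  have hp0 : ∀ j : ℕ, 0 ≤ 1 - r ^ (s + j) := fun j => by
    have := pow_le_one₀ hr0.le hr1.le (n := s + j); linarith
  have hp1 : ∀ j : ℕ, 1 - r ^ (s + j) ≤ 1 := fun j => by
    have := pow_nonneg hr0.le (s + j); linarith
  have hP := hasProd_iInf (fun j => 1 - r ^ (s + j)) hp0 hp1
  rw [hP.tprod_eq]
  have hxpos : 0 < r ^ s := pow_pos hr0 s
  rcases le_or_gt (2.1 * r ^ s) 0.72 with h | h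
  · -- tau = 2.1 x
    rw [tau, min_eq_right h]
    have hbound : 1 - r ^ s / (1 - r) ≤ ⨅ t : Finset ℕ, ∏ j ∈ t, (1 - r ^ (s + j)) := by
      refine le_ciInf fun t => ?_
      have := partial_prod_lb r hr0 hr s 0 hs t
      simpa using this
    have hdiv : r ^ s / (1 - r) ≤ 2 * r ^ s := by
      rw [div_le_iff₀ (by linarith)]
      nlinarith
    calc 1 - 2.1 * r ^ s < 1 - 2 * r ^ s := by nlinarith
      _ ≤ 1 - r ^ s / (1 - r) := by linarith
      _ ≤ _ := hbound
  · -- tau = 0.72 ; must be q = 2, s = 1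
    rw [tau, min_eq_left h.le]
    have hxr : r ^ s ≤ r := pow_le_of_le_one hr0.le hr1.le (by omega)
    have hrbig : (12 : ℝ) / 35 < r := by nlinarith
    have hq3 : q < 3 := by
      by_contra hc
      push_neg at hc
      have : (3 : ℝ) ≤ (q : ℝ) := by exact_mod_cast hc
      have : r ≤ 3⁻¹ := inv_anti₀ (by norm_num) this
      linarith
    have hqe : q = 2 := by omega
    have hs2 : s < 2 := by
      by_contra hc
      push_neg at hc
      have h1 : r ^ s ≤ r ^ 2 := pow_le_pow_of_le_one hr0.le hr1.le hc
      have h2 : r ^ 2 ≤ (2⁻¹ : ℝ) ^ 2 := by nlinarith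
      nlinarith
    have hse : s = 1 := by omega
    subst hqe hse
    have hre : r = 2⁻¹ := by rw [hrdef]; norm_num
    have hbound : (9 : ℝ) / 32 ≤ ⨅ t : Finset ℕ, ∏ j ∈ t, (1 - r ^ (1 + j)) := by
      refine le_ciInf fun t => ?_
      have := partial_prod_lb r hr0 hr 1 2 le_rfl t
      refine le_trans (le_of_eq ?_) this
      rw [hre]
      norm_num [Finset.prod_range_succ]
    calc (1 : ℝ) - 0.72 < 9 / 32 := by norm_num
      _ ≤ _ := hbound
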